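/- For every equilibrium strategy σ*, total surplus is bounded below by the no-information benchmark and above by the full-information benchmark: max{0, ρ − c} ≤ Π(σ*) ≤ ρ·(1 − c). -/

import Mathlib

open Finset Filter Topology

noncomputable section

/-- Probability that a single buyer rejects the seller, given conditional signal
distribution `p` and strategy `σ`: `r_θ(σ) = 1 - Σ_s p_θ(s)·σ(s)`. -/
def rej {m : ℕ} (p σ : Fin m → ℝ) : ℝ := 1 - ∑ s, p s * σ s

/-- `ν_θ(σ) = (1/n)·Σ_{k=0}^{n-1} r_θ(σ)^k`: probability of being visited. -/
def visit (n : ℕ) {m : ℕ} (p σ : Fin m → ℝ) : ℝ :=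
  (1 / (n : ℝ)) * ∑ k ∈ Finset.range n, rej p σ ^ k

/-- Interim belief `Ψ(σ) = ρ·ν_H(σ) / (ρ·ν_H(σ) + (1-ρ)·ν_L(σ))`. -/
def interim (ρ : ℝ) (n : ℕ) {m : ℕ} (pL pH σ : Fin m → ℝ) : ℝ :=
  ρ * visit n pH σ / (ρ * visit n pH σ + (1 - ρ) * visit n pL σ)

/-- Posterior belief `Q_ψ(s) = ψ·p_H(s) / (ψ·p_H(s) + (1-ψ)·p_L(s))`. -/
def post {m : ℕ} (ψ : ℝ) (pL pH : Fin m → ℝ) (s : Fin m) : ℝ :=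
  ψ * pH s / (ψ * pH s + (1 - ψ) * pL s)

/-- A strategy maps each signal to an acceptance probability in `[0,1]`. -/
def IsStrategy {m : ℕ} (σ : Fin m → ℝ) : Prop := ∀ s, 0 ≤ σ s ∧ σ s ≤ 1

/-- `σ` is an equilibrium strategy: with `ψ* = Ψ(σ)`, accept for sure when the
posterior exceeds `c`, reject for sure when it falls below `c`. -/
def IsEquilibrium (ρ c : ℝ) (n : ℕ) {m : ℕ} (pL pH σ : Fin m → ℝ) : Prop :=
  IsStrategy σ ∧
  ∀ s : Fin m,
    (c < post (interim ρ n pL pH σ) pL pH s → σ s = 1) ∧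
    (post (interim ρ n pL pH σ) pL pH s < c → σ s = 0)

/-- Total surplus `Π(σ) = (1-c)·ρ·(1-r_H(σ)^n) - c·(1-ρ)·(1-r_L(σ)^n)`. -/
def surplus (ρ c : ℝ) (n : ℕ) {m : ℕ} (pL pH σ : Fin m → ℝ) : ℝ :=
  (1 - c) * ρ * (1 - rej pH σ ^ n) - c * (1 - ρ) * (1 - rej pL σ ^ n)

/-- The most selective equilibrium strategy. -/
def MostSelective (ρ c : ℝ) (n : ℕ) {m : ℕ} (pL pH σ : Fin m → ℝ) : Prop :=
  IsEquilibrium ρ c n pL pH σ ∧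
  ∀ σ' : Fin m → ℝ, IsEquilibrium ρ c n pL pH σ' → ∀ s, σ s ≤ σ' s

/-- The least selective equilibrium strategy. -/
def LeastSelective (ρ c : ℝ) (n : ℕ) {m : ℕ} (pL pH σ : Fin m → ℝ) : Prop :=
  IsEquilibrium ρ c n pL pH σ ∧
  ∀ σ' : Fin m → ℝ, IsEquilibrium ρ c n pL pH σ' → ∀ s, σ' s ≤ σ s

/-- An experiment: `p_L, p_H` are probability mass functions with full joint support,
indexed so that likelihood ratios are nondecreasing. -/
def IsExperiment {m : ℕ} (pL pH : Fin m → ℝ) : Prop :=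
  (∀ s, 0 ≤ pL s) ∧ (∀ s, 0 ≤ pH s) ∧
  (∑ s, pL s = 1) ∧ (∑ s, pH s = 1) ∧
  (∀ s, 0 < pL s + pH s) ∧
  (∀ i j : Fin m, i ≤ j → pH i * pL j ≤ pH j * pL i)

/-- A strategy is monotone: a positive acceptance probability at `s_i` forces sure
acceptance at every signal with strictly higher likelihood ratio. -/
def MonotoneStrategy {m : ℕ} (pL pH σ : Fin m → ℝ) : Prop :=
  ∀ i j : Fin m, 0 < σ i → pH i * pL j < pH j * pL i → σ j = 1

set_option maxHeartbeats 1000000 in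
/-- equilibrium total surplus lies between the no-information benchmark
`max{0, ρ - c}` and the full-information benchmark `ρ·(1-c)`. -/
theorem surplus_benchmarks
    (ρ c : ℝ) (hρ : ρ ∈ Set.Ioo (0:ℝ) 1) (hc : c ∈ Set.Ioo (0:ℝ) 1)
    (n : ℕ) (hn : 1 ≤ n) (m : ℕ) (hm : 1 ≤ m)
    (pL pH : Fin m → ℝ) (hE : IsExperiment pL pH)
    (σ : Fin m → ℝ) (hσ : IsEquilibrium ρ c n pL pH σ) :
    max 0 (ρ - c) ≤ surplus ρ c n pL pH σ ∧
    surplus ρ c n pL pH σ ≤ ρ * (1 - c) := by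
  obtain ⟨hρ0, hρ1⟩ := hρ
  obtain ⟨hc0, hc1⟩ := hc
  obtain ⟨hLpos, hHpos, hLsum, hHsum, hjoint, hmlr⟩ := hE
  obtain ⟨hstrat, heq⟩ := hσ
  have hn0 : (0:ℝ) < n := by exact_mod_cast Nat.lt_of_lt_of_le Nat.zero_lt_one hn
  have hnne : (n:ℝ) ≠ 0 := ne_of_gt hn0
  set x := rej pH σ with hxdef
  set y := rej pL σ with hydef
  set νH := visit n pH σ with hνHdef
  set νL := visit n pL σ with hνLdef
  set ψ := interim ρ n pL pH σ with hψdef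
  set GX := ∑ k ∈ Finset.range n, x ^ k with hGX
  set GY := ∑ k ∈ Finset.range n, y ^ k with hGY
  clear_value νH νL ψ GX GY
  clear_value x y
  -- bounds on x and y
  have hsumH0 : 0 ≤ ∑ s, pH s * σ s :=
    Finset.sum_nonneg fun s _ => mul_nonneg (hHpos s) (hstrat s).1
  have hsumH1 : ∑ s, pH s * σ s ≤ 1 := by
    have h : ∑ s, pH s * σ s ≤ ∑ s, pH s := by
      apply Finset.sum_le_sum; intro s _
      exact mul_le_of_le_one_right (hHpos s) (hstrat s).2
    linarith [hHsum ▸ h]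
  have hsumL0 : 0 ≤ ∑ s, pL s * σ s :=
    Finset.sum_nonneg fun s _ => mul_nonneg (hLpos s) (hstrat s).1
  have hsumL1 : ∑ s, pL s * σ s ≤ 1 := by
    have h : ∑ s, pL s * σ s ≤ ∑ s, pL s := by
      apply Finset.sum_le_sum; intro s _
      exact mul_le_of_le_one_right (hLpos s) (hstrat s).2
    linarith [hLsum ▸ h]
  have hx0 : 0 ≤ x := by rw [hxdef, rej]; linarith
  have hx1 : x ≤ 1 := by rw [hxdef, rej]; linarith
  have hy0 : 0 ≤ y := by rw [hydef, rej]; linarith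
  have hy1 : y ≤ 1 := by rw [hydef, rej]; linarith
  -- geometric sums
  have hGX1 : (1:ℝ) ≤ GX := by
    rw [hGX]
    calc (1:ℝ) = x ^ 0 := by norm_num
      _ ≤ ∑ k ∈ Finset.range n, x ^ k :=
        Finset.single_le_sum (fun k _ => pow_nonneg hx0 k) (Finset.mem_range.mpr hn)
  have hGY1 : (1:ℝ) ≤ GY := by
    rw [hGY]
    calc (1:ℝ) = y ^ 0 := by norm_num
      _ ≤ ∑ k ∈ Finset.range n, y ^ k :=
        Finset.single_le_sum (fun k _ => pow_nonneg hy0 k) (Finset.mem_range.mpr hn)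
  have hGXn : GX = (n:ℝ) * νH := by
    rw [hνHdef, visit, ← hxdef, ← hGX, ← mul_assoc, mul_one_div, div_self hnne, one_mul]
  have hGYn : GY = (n:ℝ) * νL := by
    rw [hνLdef, visit, ← hydef, ← hGY, ← mul_assoc, mul_one_div, div_self hnne, one_mul]
  have hνH0 : 0 < νH := by
    by_contra h
    push_neg at h
    have hh : (n:ℝ) * νH ≤ 0 := mul_nonpos_iff.mpr (Or.inl ⟨hn0.le, h⟩)
    linarith
  have hνL0 : 0 < νL := by
    by_contra h
    push_neg at h
    have hh : (n:ℝ) * νL ≤ 0 := mul_nonpos_iff.mpr (Or.inl ⟨hn0.le, h⟩)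
    linarith
  set D := ρ * νH + (1 - ρ) * νL with hDdef
  clear_value D
  have hD : 0 < D := by
    rw [hDdef]
    have h1 := mul_pos hρ0 hνH0
    have h2 := mul_pos (by linarith : (0:ℝ) < 1 - ρ) hνL0
    linarith
  have hψeq : ψ = ρ * νH / D := by
    rw [hψdef, interim, ← hνHdef, ← hνLdef, ← hDdef]
  have hψ0 : 0 < ψ := by
    rw [hψeq]; exact div_pos (mul_pos hρ0 hνH0) hD
  have hψ1 : ψ < 1 := by
    rw [hψeq, div_lt_one hD, hDdef]
    have h2 := mul_pos (by linarith : (0:ℝ) < 1 - ρ) hνL0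
    linarith
  have hψD : ψ * D = ρ * νH := by
    rw [hψeq, div_mul_cancel₀ _ (ne_of_gt hD)]
  set α := (1 - c) * ψ with hαdef
  set β := c * (1 - ψ) with hβdef
  clear_value α β
  have hα0 : 0 < α := by rw [hαdef]; exact mul_pos (by linarith) hψ0
  have hβ0 : 0 < β := by rw [hβdef]; exact mul_pos hc0 (by linarith)
  have hαD : α * D = (1 - c) * ρ * νH := by
    rw [hαdef]; linear_combination (1 - c) * hψD
  have hβD : β * D = c * (1 - ρ) * νL := by
    rw [hβdef]; linear_combination (-c) * hψD + c * hDdef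
  -- per-signal equilibrium inequalities
  have hds : ∀ s, 0 < ψ * pH s + (1 - ψ) * pL s := by
    intro s
    rcases lt_or_ge 0 (pH s) with h | h
    · have h1 := mul_pos hψ0 h
      have h2 := mul_nonneg (by linarith : (0:ℝ) ≤ 1 - ψ) (hLpos s)
      linarith
    · have hpH : pH s = 0 := le_antisymm h (hHpos s)
      have hpL : 0 < pL s := by have := hjoint s; linarith
      have h1 := mul_pos (by linarith : (0:ℝ) < 1 - ψ) hpL
      have h2 : ψ * pH s = 0 := by rw [hpH, mul_zero]
      linarith
  have key1 : ∀ s, 0 < σ s → β * pL s ≤ α * pH s := by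
    intro s hs
    by_contra hlt
    push_neg at hlt
    have hpost : post ψ pL pH s < c := by
      rw [post, div_lt_iff₀ (hds s)]
      rw [hαdef, hβdef] at hlt
      nlinarith [hlt, hψ0, hψ1]
    have h := (heq s).2 hpost
    rw [h] at hs
    exact lt_irrefl 0 hs
  have key2 : ∀ s, σ s < 1 → α * pH s ≤ β * pL s := by
    intro s hs
    by_contra hlt
    push_neg at hlt
    have hpost : c < post ψ pL pH s := by
      rw [post, lt_div_iff₀ (hds s)]
      rw [hαdef, hβdef] at hlt
      nlinarith [hlt, hψ0, hψ1]
    have h := (heq s).1 hpost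
    rw [h] at hs
    exact lt_irrefl 1 hs
  -- summed inequalities
  have h1x : 1 - x = ∑ s, pH s * σ s := by rw [hxdef, rej]; ring
  have h1y : 1 - y = ∑ s, pL s * σ s := by rw [hydef, rej]; ring
  have hxalt : x = ∑ s, pH s * (1 - σ s) := by
    rw [hxdef, rej]
    rw [Finset.sum_congr rfl
      (fun s _ => (mul_sub (pH s) 1 (σ s) : pH s * (1 - σ s) = pH s * 1 - pH s * σ s)),
      Finset.sum_sub_distrib]
    simp [hHsum]
  have hyalt : y = ∑ s, pL s * (1 - σ s) := by
    rw [hydef, rej]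
    rw [Finset.sum_congr rfl
      (fun s _ => (mul_sub (pL s) 1 (σ s) : pL s * (1 - σ s) = pL s * 1 - pL s * σ s)),
      Finset.sum_sub_distrib]
    simp [hLsum]
  have hS1 : β * (1 - y) ≤ α * (1 - x) := by
    rw [h1x, h1y, Finset.mul_sum, Finset.mul_sum]
    apply Finset.sum_le_sum
    intro s _
    rcases eq_or_lt_of_le (hstrat s).1 with h | h
    · rw [← h]; simp
    · have hk := key1 s h
      have := mul_le_mul_of_nonneg_right hk h.le
      linarith
  have hS2 : α * x ≤ β * y := by
    rw [hxalt, hyalt, Finset.mul_sum, Finset.mul_sum]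
    apply Finset.sum_le_sum
    intro s _
    rcases eq_or_lt_of_le (hstrat s).2 with h | h
    · rw [h]; simp
    · have hk := key2 s h
      have := mul_le_mul_of_nonneg_right hk (by linarith : (0:ℝ) ≤ 1 - σ s)
      linarith
  have hxy : x ≤ y := by
    rcases le_total α β with h | h
    · have h1 : β * (1 - y) ≤ β * (1 - x) :=
        le_trans hS1 (mul_le_mul_of_nonneg_right h (by linarith))
      have h2 := (mul_le_mul_iff_right₀ hβ0).mp h1
      linarith
    · have h1 : α * x ≤ α * y :=
        le_trans hS2 (mul_le_mul_of_nonneg_right h hy0)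
      have h2 := (mul_le_mul_iff_right₀ hα0).mp h1
      linarith
  -- key power inequality
  have hkeysum : α * x ^ n * GY ≤ β * y ^ n * GX := by
    rw [hGX, hGY, Finset.mul_sum, Finset.mul_sum]
    apply Finset.sum_le_sum
    intro k hk
    obtain ⟨j, hj⟩ : ∃ j, n = k + j + 1 := ⟨n - k - 1, by
      have := Finset.mem_range.mp hk; omega⟩
    calc α * x ^ n * y ^ k = (α * x * x ^ j) * (x ^ k * y ^ k) := by rw [hj]; ring
      _ ≤ (β * y * y ^ j) * (x ^ k * y ^ k) := by
          apply mul_le_mul_of_nonneg_right _ (mul_nonneg (pow_nonneg hx0 k) (pow_nonneg hy0 k))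
          exact mul_le_mul hS2 (pow_le_pow_left₀ hx0 hxy j) (pow_nonneg hx0 j)
            (mul_nonneg hβ0.le hy0)
      _ = β * y ^ n * x ^ k := by rw [hj]; ring
  have hAB : (1 - c) * ρ * x ^ n ≤ c * (1 - ρ) * y ^ n := by
    have hmul := mul_le_mul_of_nonneg_left hkeysum hD.le
    have e1 : D * (α * x ^ n * GY) = ((1 - c) * ρ * x ^ n) * ((n:ℝ) * νH * νL) := by
      rw [hGYn]; linear_combination ((n:ℝ) * νL * x ^ n) * hαD
    have e2 : D * (β * y ^ n * GX) = (c * (1 - ρ) * y ^ n) * ((n:ℝ) * νH * νL) := by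
      rw [hGXn]; linear_combination ((n:ℝ) * νH * y ^ n) * hβD
    rw [e1, e2] at hmul
    exact le_of_mul_le_mul_right hmul (mul_pos (mul_pos hn0 hνH0) hνL0)
  -- surplus identities
  have hsur : surplus ρ c n pL pH σ =
      (1 - c) * ρ * (1 - x ^ n) - c * (1 - ρ) * (1 - y ^ n) := by
    rw [surplus, ← hxdef, ← hydef]
  have hgx : 1 - x ^ n = (1 - x) * GX := by
    rw [hGX]; linear_combination geom_sum_mul x n
  have hgy : 1 - y ^ n = (1 - y) * GY := by
    rw [hGY]; linear_combination geom_sum_mul y n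
  have h0 : 0 ≤ surplus ρ c n pL pH σ := by
    rw [hsur, hgx, hgy]
    have e : (1 - c) * ρ * ((1 - x) * GX) - c * (1 - ρ) * ((1 - y) * GY)
        = ((n:ℝ) * D) * (α * (1 - x) - β * (1 - y)) := by
      rw [hGXn, hGYn]
      linear_combination (-((n:ℝ) * (1 - x))) * hαD + ((n:ℝ) * (1 - y)) * hβD
    rw [e]
    apply mul_nonneg (mul_nonneg hn0.le hD.le)
    linarith
  refine ⟨max_le h0 ?_, ?_⟩
  · rw [hsur]
    linarith [hAB]
  · rw [hsur]
    have hA : 0 ≤ (1 - c) * ρ * x ^ n :=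
      mul_nonneg (mul_nonneg (by linarith) hρ0.le) (pow_nonneg hx0 n)
    have hyn : y ^ n ≤ 1 := pow_le_one₀ hy0 hy1
    have hB : 0 ≤ c * (1 - ρ) * (1 - y ^ n) :=
      mul_nonneg (mul_nonneg hc0.le (by linarith)) (by linarith)
    linarith
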